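/- Let b and k be natural numbers with k ≤ b. Work in the multivariate polynomial ring MvPolynomial (Fin b) (Polynomial ℤ), and write u for the coefficient variable Polynomial.X and e_j for the j-th elementary symmetric polynomial in the b variables. Then the coefficient of the squarefree monomial X₁·X₂⋯X_b (exponent vector constantly 1) in the polynomial ( ∑_{j=1}^{b} C(u^{j−1}) · e_j )^k equals u^{b−k} · N, where N is the number of surjective functions from Fin b to Fin k. -/

import Mathlib

open Finset

lemma prod_monomial_one {σ R ι : Type*} [CommSemiring R] (s : Finset ι) (d : ι → (σ →₀ ℕ)) :
    ∏ i ∈ s, MvPolynomial.monomial (d i) (1 : R) =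
      MvPolynomial.monomial (∑ i ∈ s, d i) 1 := by
  induction s using Finset.cons_induction with
  | empty => simp [MvPolynomial.monomial_zero']
  | cons a s ha ih => rw [Finset.prod_cons, Finset.sum_cons, ih, MvPolynomial.monomial_mul, one_mul]

-- Lemma B
lemma cond_iff {b k : ℕ} (g : Fin k → Finset (Fin b)) :
    (∑ i : Fin k, ∑ j ∈ g i, Finsupp.single j 1) =
      (Finsupp.equivFunOnFinite.symm fun _ : Fin b => 1) ↔
    ∀ j, ∃! i, j ∈ g i := by
  rw [Finsupp.ext_iff]
  refine forall_congr' fun j => ?_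
  have lhs : (∑ i : Fin k, ∑ j' ∈ g i, Finsupp.single j' (1:ℕ)) j
      = ∑ i : Fin k, if j ∈ g i then 1 else 0 := by
    rw [Finsupp.finset_sum_apply]
    refine Finset.sum_congr rfl fun i _ => ?_
    rw [Finsupp.finset_sum_apply]
    simp [Finsupp.single_apply, Finset.sum_ite_eq' (g i) j]
  rw [lhs]
  simp only [Finsupp.coe_equivFunOnFinite_symm]
  rw [Finset.sum_boole, Nat.cast_id]
  rw [Finset.card_eq_one]
  constructor
  · rintro ⟨a, ha⟩
    refine ⟨a, ?_, fun x hx => ?_⟩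
    · have := Finset.mem_singleton_self a; rw [← ha] at this; simpa using this
    · have : x ∈ Finset.filter (fun i => j ∈ g i) univ := by simpa using hx
      rw [ha] at this; simpa using this
  · rintro ⟨a, ha, hu⟩
    exact ⟨a, Finset.eq_singleton_iff_unique_mem.2 ⟨by simpa using ha, fun x hx => hu x (by simpa using hx)⟩⟩

lemma sum_card_eq {b k : ℕ} (g : Fin k → Finset (Fin b)) (h : ∀ j, ∃! i, j ∈ g i) :
    ∑ i : Fin k, (g i).card = b := by
  have h1 : ∀ i : Fin k, (g i).card = ∑ j : Fin b, if j ∈ g i then 1 else 0 := by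
    intro i; rw [Finset.sum_boole, Nat.cast_id, Finset.filter_mem_eq_inter, Finset.univ_inter]
  simp_rw [h1]
  rw [Finset.sum_comm]
  have h2 : ∀ j : Fin b, (∑ i : Fin k, if j ∈ g i then 1 else 0) = 1 := by
    intro j
    rw [Finset.sum_boole, Nat.cast_id, Finset.card_eq_one]
    obtain ⟨a, ha, hu⟩ := h j
    exact ⟨a, Finset.eq_singleton_iff_unique_mem.2 ⟨by simpa using ha, fun x hx => hu x (by simpa using hx)⟩⟩
  simp_rw [h2]
  simp

lemma card_cond_eq (b k : ℕ)
    [DecidablePred (fun g : Fin k → Finset (Fin b) => ∀ j, ∃! i, j ∈ g i)] :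
    ((Fintype.piFinset (fun _ : Fin k => (univ.powerset.filter (fun S : Finset (Fin b) => S.Nonempty)))).filter
      (fun g => ∀ j, ∃! i, j ∈ g i)).card
    = (univ.filter (fun f : Fin b → Fin k => Function.Surjective f)).card := by
  symm
  apply Finset.card_bij (fun f _ => fun i => univ.filter (fun j => f j = i))
  · intro f hf
    simp only [Finset.mem_filter, Finset.mem_univ, true_and] at hf ⊢
    constructor
    · rw [Fintype.mem_piFinset]
      intro i
      simp only [Finset.mem_filter, Finset.mem_powerset, Finset.subset_univ, true_and]
      obtain ⟨j, hj⟩ := hf i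
      exact ⟨j, by simp [hj]⟩
    · intro j
      refine ⟨f j, by simp, fun x hx => ?_⟩
      exact hx.symm
  · intro f hf f' hf' h
    funext j
    have := congrFun h (f' j)
    have hj : j ∈ univ.filter (fun j' => f' j' = f' j) := by simp
    rw [← this] at hj
    simpa using hj
  · intro g hg
    simp only [Finset.mem_filter, Fintype.mem_piFinset] at hg
    obtain ⟨hmem, hcond⟩ := hg
    choose f hf hu using hcond
    refine ⟨f, ?_, ?_⟩
    · simp only [Finset.mem_filter, Finset.mem_univ, true_and]
      intro i
      obtain ⟨j, hj⟩ := by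
        have := (hmem i).2
        exact this
      exact ⟨j, (hu j i hj).symm⟩
    · funext i
      ext j
      simp only [Finset.mem_filter, Finset.mem_univ, true_and]
      constructor
      · rintro rfl; exact hf j
      · intro hj; exact ((hu j i hj) ▸ rfl)


/-- In `ℤ[u][x₁,…,x_b]`, the coefficient of the squarefree monomial `x₁·x₂⋯x_b` in
`(∑_{j=1}^{b} u^{j−1} e_j)^k` (with `e_j` the `j`-th elementary symmetric polynomial)
equals `u^{b−k}` times the number of surjections from a `b`-set onto a `k`-set, i.e.
`u^{b−k}·k!·S(b,k)`. -/
theorem coeff_of_power_of_twisted_esymm (b k : ℕ) (hk : k ≤ b) :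
    MvPolynomial.coeff (Finsupp.equivFunOnFinite.symm fun _ : Fin b => 1)
      ((∑ j ∈ Icc 1 b, MvPolynomial.C (Polynomial.X ^ (j - 1)) *
        MvPolynomial.esymm (Fin b) (Polynomial ℤ) j) ^ k) =
      Polynomial.X ^ (b - k) *
        (Fintype.card {f : Fin b → Fin k // Function.Surjective f} : Polynomial ℤ) := by
  classical
  set m : Fin b →₀ ℕ := Finsupp.equivFunOnFinite.symm fun _ : Fin b => 1 with hm
  set T : Finset (Finset (Fin b)) :=
    univ.powerset.filter (fun S : Finset (Fin b) => S.Nonempty) with hT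
  -- Step 1: rewrite the sum over j as a sum over nonempty subsets
  have h1 : (∑ j ∈ Icc 1 b, MvPolynomial.C (Polynomial.X ^ (j - 1)) *
        MvPolynomial.esymm (Fin b) (Polynomial ℤ) j)
      = ∑ S ∈ T, MvPolynomial.C (Polynomial.X ^ (S.card - 1)) * ∏ i ∈ S, MvPolynomial.X i := by
    have hmap : ∀ S ∈ T, S.card ∈ Icc 1 b := by
      intro S hS
      rw [hT, Finset.mem_filter] at hS
      rw [Finset.mem_Icc]
      exact ⟨hS.2.card_pos, le_trans (Finset.card_le_univ S) (by simp)⟩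
    rw [← Finset.sum_fiberwise_of_maps_to hmap
      (fun S => MvPolynomial.C (Polynomial.X ^ (S.card - 1)) * ∏ i ∈ S, MvPolynomial.X i)]
    refine Finset.sum_congr rfl fun j hj => ?_
    have hj1 : 1 ≤ j := (Finset.mem_Icc.1 hj).1
    have hset : Finset.filter (fun S => S.card = j) T = Finset.powersetCard j univ := by
      rw [hT, Finset.filter_filter, Finset.powersetCard_eq_filter]
      refine Finset.filter_congr fun S _ => ?_
      constructor
      · exact fun h => h.2
      · intro h
        exact ⟨Finset.card_pos.1 (h ▸ hj1), h⟩
    rw [hset, MvPolynomial.esymm, Finset.mul_sum]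
    refine Finset.sum_congr rfl fun S hS => ?_
    rw [(Finset.mem_powersetCard.1 hS).2]
  rw [h1]
  -- Step 2: expand the k-th power as a sum over tuples of subsets
  have h2 : ((∑ S ∈ T, MvPolynomial.C (Polynomial.X ^ (S.card - 1)) * ∏ i ∈ S, MvPolynomial.X i) : MvPolynomial (Fin b) (Polynomial ℤ)) ^ k
      = ∑ g ∈ Fintype.piFinset (fun _ : Fin k => T),
          ∏ i : Fin k, (MvPolynomial.C (Polynomial.X ^ ((g i).card - 1)) * ∏ j ∈ g i, MvPolynomial.X j) := by
    rw [← Fin.prod_const k]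
    exact Finset.prod_univ_sum _ _
  rw [h2, MvPolynomial.coeff_sum]
  -- Step 3: compute each coefficient
  have key : ∀ g ∈ Fintype.piFinset (fun _ : Fin k => T),
      MvPolynomial.coeff m ((∏ i : Fin k,
        (MvPolynomial.C (Polynomial.X ^ ((g i).card - 1)) * ∏ j ∈ g i, MvPolynomial.X j) :
          MvPolynomial (Fin b) (Polynomial ℤ)))
      = if (∀ j, ∃! i, j ∈ g i) then Polynomial.X ^ (b - k) else 0 := by
    intro g hg
    have hne : ∀ i, (g i).Nonempty := by
      intro i
      have := Fintype.mem_piFinset.1 hg i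
      rw [hT, Finset.mem_filter] at this
      exact this.2
    have hX : ∀ i : Fin k, (∏ j ∈ g i, MvPolynomial.X j : MvPolynomial (Fin b) (Polynomial ℤ))
        = MvPolynomial.monomial (∑ j ∈ g i, Finsupp.single j 1) 1 := by
      intro i
      rw [← prod_monomial_one]
      rfl
    simp_rw [hX]
    rw [Finset.prod_mul_distrib, prod_monomial_one, ← map_prod]
    rw [MvPolynomial.coeff_C_mul, MvPolynomial.coeff_monomial]
    rw [Finset.prod_pow_eq_pow_sum]
    by_cases hc : ∀ j, ∃! i, j ∈ g i
    · rw [if_pos hc, if_pos ((cond_iff g).2 hc)]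
      have hcard : ∑ i : Fin k, (g i).card = b := sum_card_eq g hc
      have hexp : ∑ i : Fin k, ((g i).card - 1) = b - k := by
        have hstep : ∑ i : Fin k, ((g i).card - 1) + k = b := by
          calc ∑ i : Fin k, ((g i).card - 1) + k
              = ∑ i : Fin k, ((g i).card - 1) + ∑ _i : Fin k, 1 := by simp
            _ = ∑ i : Fin k, (((g i).card - 1) + 1) := (Finset.sum_add_distrib).symm
            _ = ∑ i : Fin k, (g i).card :=
                Finset.sum_congr rfl fun i _ => Nat.succ_pred_eq_of_pos (hne i).card_pos
            _ = b := hcard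
        omega
      rw [hexp, mul_one]
    · rw [if_neg hc, if_neg, mul_zero]
      exact fun h => hc ((cond_iff g).1 h)
  rw [Finset.sum_congr rfl key]
  rw [← Finset.sum_filter]
  rw [Finset.sum_const, card_cond_eq, nsmul_eq_mul]
  rw [Fintype.card_subtype, mul_comm]
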